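/- For every f ∈ L^∞(K), the function t ↦ (J_K f)(σ_K(t)) on [0, λ(K)] is Lipschitz with constant ‖f‖_∞ and vanishes at 0; more precisely, for 0 ≤ s < t ≤ λ(K), |(J_K f)(σ_K(t)) − (J_K f)(σ_K(s))| ≤ ‖f‖_∞ (t − s), using that λ([σ_K(s), σ_K(t)] ∩ K) = t − s. -/

import Mathlib

open MeasureTheory Set

/-- Measure projection `π_K`. -/
noncomputable def piProj (K : Set ℝ) (x : ℝ) : ℝ :=
  (volume (Set.Icc (sInf K) x ∩ K)).toReal

/-- Left-endpoint selector `σ_K`. -/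
noncomputable def sigmaSel (K : Set ℝ) (t : ℝ) : ℝ :=
  sInf {x ∈ K | piProj K x = t}

/-- Primitive `J_K f`. -/
noncomputable def JPrim (K : Set ℝ) (f : ℝ → ℝ) (x : ℝ) : ℝ :=
  ∫ y in Set.Icc (sInf K) x ∩ K, f y

namespace Stmt12Aux

lemma meas_ne_top {K : Set ℝ} (hK : IsCompact K) (A : Set ℝ) :
    volume (A ∩ K) ≠ ⊤ :=
  ((measure_mono inter_subset_right).trans_lt hK.measure_lt_top).ne

lemma split_meas {K : Set ℝ} (hK : IsCompact K) {x y : ℝ} (hax : sInf K ≤ x) (hxy : x ≤ y) :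
    volume (Icc (sInf K) y ∩ K) = volume (Icc (sInf K) x ∩ K) + volume (Ioc x y ∩ K) := by
  have hdisj : Disjoint (Icc (sInf K) x ∩ K) (Ioc x y ∩ K) := by
    refine Set.disjoint_left.2 fun z hz hz' => ?_
    exact absurd hz.1.2 (not_le.2 hz'.1.1)
  rw [← Set.Icc_union_Ioc_eq_Icc hax hxy, Set.union_inter_distrib_right,
    measure_union hdisj (measurableSet_Ioc.inter hK.isClosed.measurableSet)]

lemma piProj_mono (K : Set ℝ) (hK : IsCompact K) : Monotone (piProj K) := fun x y hxy =>
  ENNReal.toReal_mono (meas_ne_top hK _)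
    (measure_mono (inter_subset_inter_left _ (Icc_subset_Icc_right hxy)))

lemma piProj_lip {K : Set ℝ} (hK : IsCompact K) {x y : ℝ} (hxy : x ≤ y) :
    piProj K y - piProj K x ≤ y - x := by
  rcases le_or_gt (sInf K) x with hax | hax
  · have h := split_meas hK hax hxy
    have h1 : piProj K y = piProj K x + (volume (Ioc x y ∩ K)).toReal := by
      rw [piProj, h, ENNReal.toReal_add (meas_ne_top hK _) (meas_ne_top hK _)]; rfl
    have h2 : (volume (Ioc x y ∩ K)).toReal ≤ y - x := by
      have hm : volume (Ioc x y ∩ K) ≤ ENNReal.ofReal (y - x) := by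
        rw [← Real.volume_Ioc]; exact measure_mono inter_subset_left
      exact ENNReal.toReal_le_of_le_ofReal (by linarith) hm
    linarith
  · have hx0 : piProj K x = 0 := by
      rw [piProj, Set.Icc_eq_empty (not_le.2 hax), Set.empty_inter, measure_empty,
        ENNReal.toReal_zero]
    rcases le_or_gt (sInf K) y with hay | hay
    · have h2 : piProj K y ≤ y - sInf K := by
        have hm : volume (Icc (sInf K) y ∩ K) ≤ ENNReal.ofReal (y - sInf K) := by
          rw [← Real.volume_Icc]; exact measure_mono inter_subset_left
        exact ENNReal.toReal_le_of_le_ofReal (by linarith) hm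
      rw [hx0]; linarith
    · have hy0 : piProj K y = 0 := by
        rw [piProj, Set.Icc_eq_empty (not_le.2 hay), Set.empty_inter, measure_empty,
          ENNReal.toReal_zero]
      rw [hx0, hy0]; linarith

lemma piProj_continuous {K : Set ℝ} (hK : IsCompact K) : Continuous (piProj K) := by
  apply (LipschitzWith.of_dist_le_mul (K := 1) fun x y => ?_).continuous
  rcases le_total x y with h | h
  · rw [Real.dist_eq, Real.dist_eq, NNReal.coe_one, one_mul,
      abs_of_nonpos (by have := piProj_mono K hK h; linarith),
      abs_of_nonpos (by linarith)]
    have := piProj_lip hK h; linarith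
  · rw [Real.dist_eq, Real.dist_eq, NNReal.coe_one, one_mul,
      abs_of_nonneg (by have := piProj_mono K hK h; linarith),
      abs_of_nonneg (by linarith)]
    have := piProj_lip hK h; linarith

lemma sigma_mem {K : Set ℝ} (hK : IsCompact K) (hpos : 0 < volume K) {t : ℝ}
    (h0 : 0 ≤ t) (ht : t ≤ (volume K).toReal) :
    sigmaSel K t ∈ K ∧ piProj K (sigmaSel K t) = t := by
  have hne : K.Nonempty := by
    rcases Set.eq_empty_or_nonempty K with h | h
    · rw [h, measure_empty] at hpos; exact absurd hpos (lt_irrefl _)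
    · exact h
  set a := sInf K with ha
  set b := sSup K with hb
  have haK : a ∈ K := hK.sInf_mem hne
  have hbK : b ∈ K := hK.sSup_mem hne
  have hab : a ≤ b := csInf_le_csSup hne hK.bddBelow hK.bddAbove
  have hpa : piProj K a = 0 := by
    rw [piProj, ← ha, Set.Icc_self]
    have : volume ({a} ∩ K) = 0 :=
      measure_mono_null inter_subset_left (Real.volume_singleton)
    rw [this, ENNReal.toReal_zero]
  have hpb : piProj K b = (volume K).toReal := by
    rw [piProj, ← ha, Set.inter_eq_self_of_subset_right]
    intro z hz
    exact ⟨csInf_le hK.bddBelow hz, le_csSup hK.bddAbove hz⟩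
  -- IVT
  have hIVT : t ∈ piProj K '' Icc a b := by
    apply intermediate_value_Icc hab (piProj_continuous hK).continuousOn
    rw [hpa, hpb]; exact ⟨h0, ht⟩
  obtain ⟨x, hx, hpx⟩ := hIVT
  -- push x to a point of K
  set x' := sSup (K ∩ Iic x) with hx'
  have hne' : (K ∩ Iic x).Nonempty := ⟨a, haK, hx.1⟩
  have hbdd' : BddAbove (K ∩ Iic x) := ⟨x, fun z hz => hz.2⟩
  have hx'mem : x' ∈ K ∩ Iic x :=
    (hK.isClosed.inter isClosed_Iic).csSup_mem hne' hbdd'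
  have hseteq : Icc a x ∩ K = Icc a x' ∩ K := by
    apply Set.Subset.antisymm
    · rintro z ⟨⟨hz1, hz2⟩, hzK⟩
      exact ⟨⟨hz1, le_csSup hbdd' ⟨hzK, hz2⟩⟩, hzK⟩
    · rintro z ⟨⟨hz1, hz2⟩, hzK⟩
      exact ⟨⟨hz1, hz2.trans hx'mem.2⟩, hzK⟩
  have hpx' : piProj K x' = t := by
    rw [piProj, ← ha, ← hseteq]; exact hpx
  -- the set S_t
  have hSne : {y ∈ K | piProj K y = t}.Nonempty := ⟨x', hx'mem.1, hpx'⟩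
  have hSclosed : IsClosed {y ∈ K | piProj K y = t} := by
    have : {y ∈ K | piProj K y = t} = K ∩ (piProj K) ⁻¹' {t} := by
      ext z; simp [Set.mem_setOf_eq]
    rw [this]
    exact hK.isClosed.inter (isClosed_singleton.preimage (piProj_continuous hK))
  have hSbdd : BddBelow {y ∈ K | piProj K y = t} :=
    hK.bddBelow.mono fun z hz => hz.1
  have := hSclosed.csInf_mem hSne hSbdd
  exact ⟨this.1, this.2⟩

end Stmt12Aux

open Stmt12Aux in
theorem stmt12 (K : Set ℝ) (hK : IsCompact K) (hpos : 0 < volume K)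
    (f : ℝ → ℝ) (hf : Measurable f) (hfb : MemLp f ⊤ (volume.restrict K)) :
    JPrim K f (sigmaSel K 0) = 0 ∧
    ∀ s t : ℝ, 0 ≤ s → s < t → t ≤ (volume K).toReal →
      (volume (Set.Icc (sigmaSel K s) (sigmaSel K t) ∩ K)).toReal = t - s ∧
      |JPrim K f (sigmaSel K t) - JPrim K f (sigmaSel K s)| ≤
        (eLpNorm f ⊤ (volume.restrict K)).toReal * (t - s) := by
  haveI : IsFiniteMeasure (volume.restrict K) :=
    ⟨by rw [Measure.restrict_apply_univ]; exact hK.measure_lt_top⟩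
  have hint : IntegrableOn f K volume :=
    memLp_one_iff_integrable.mp (hfb.mono_exponent le_top)
  constructor
  · -- JPrim at σ 0 vanishes
    obtain ⟨hmem0, hp0⟩ := sigma_mem hK hpos (le_refl 0) ENNReal.toReal_nonneg
    have h0 : volume (Icc (sInf K) (sigmaSel K 0) ∩ K) = 0 := by
      have := hp0
      rw [piProj] at this
      exact (ENNReal.toReal_eq_zero_iff _).mp this |>.resolve_right (meas_ne_top hK _)
    rw [JPrim, Measure.restrict_eq_zero.2 h0, integral_zero_measure]
  · intro s t hs hst ht
    obtain ⟨hmemS, hpS⟩ := sigma_mem hK hpos hs (le_of_lt (hst.trans_le ht))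
    obtain ⟨hmemT, hpT⟩ := sigma_mem hK hpos (hs.trans hst.le) ht
    set xs := sigmaSel K s
    set xt := sigmaSel K t
    have hxst : xs ≤ xt := by
      by_contra h
      exact absurd (hpT ▸ hpS ▸ piProj_mono K hK (le_of_not_ge h)) (not_le.2 hst)
    have haxs : sInf K ≤ xs := csInf_le hK.bddBelow hmemS
    have hsplit := split_meas hK haxs hxst
    have hIoc : (volume (Ioc xs xt ∩ K)).toReal = t - s := by
      have h1 : (volume (Icc (sInf K) xt ∩ K)).toReal
          = (volume (Icc (sInf K) xs ∩ K)).toReal + (volume (Ioc xs xt ∩ K)).toReal := by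
        rw [hsplit, ENNReal.toReal_add (meas_ne_top hK _) (meas_ne_top hK _)]
      have h2 : piProj K xt = t := hpT
      have h3 : piProj K xs = s := hpS
      rw [piProj] at h2 h3
      rw [h2, h3] at h1
      linarith
    have hIccIoc : volume (Icc xs xt ∩ K) = volume (Ioc xs xt ∩ K) := by
      apply le_antisymm
      · calc volume (Icc xs xt ∩ K) ≤ volume ({xs} ∪ (Ioc xs xt ∩ K)) := by
              apply measure_mono
              rintro z ⟨⟨hz1, hz2⟩, hzK⟩
              rcases eq_or_lt_of_le hz1 with h | h
              · exact Or.inl h.symm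
              · exact Or.inr ⟨⟨h, hz2⟩, hzK⟩
            _ ≤ volume ({xs} : Set ℝ) + volume (Ioc xs xt ∩ K) := measure_union_le _ _
            _ = volume (Ioc xs xt ∩ K) := by rw [Real.volume_singleton, zero_add]
      · exact measure_mono (inter_subset_inter_left _ Ioc_subset_Icc_self)
    refine ⟨by rw [hIccIoc, hIoc], ?_⟩
    -- integral decomposition
    have hunion : Icc (sInf K) xt ∩ K = (Icc (sInf K) xs ∩ K) ∪ (Ioc xs xt ∩ K) := by
      rw [← Set.Icc_union_Ioc_eq_Icc haxs hxst, Set.union_inter_distrib_right]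
    have hdisj : Disjoint (Icc (sInf K) xs ∩ K) (Ioc xs xt ∩ K) := by
      refine Set.disjoint_left.2 fun z hz hz' => ?_
      exact absurd hz.1.2 (not_le.2 hz'.1.1)
    have hIntS : IntegrableOn f (Icc (sInf K) xs ∩ K) volume :=
      hint.mono_set inter_subset_right
    have hIntIoc : IntegrableOn f (Ioc xs xt ∩ K) volume :=
      hint.mono_set inter_subset_right
    have hJdiff : JPrim K f xt - JPrim K f xs = ∫ y in Ioc xs xt ∩ K, f y := by
      rw [JPrim, JPrim, hunion,
        setIntegral_union hdisj (measurableSet_Ioc.inter hK.isClosed.measurableSet) hIntS hIntIoc]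
      ring
    rw [hJdiff, ← Real.norm_eq_abs]
    -- bound the integral
    set C := (eLpNorm f ⊤ (volume.restrict K)).toReal with hC
    have hEtop : eLpNorm f ⊤ (volume.restrict K) ≠ ⊤ := hfb.2.ne
    have hae0 : ∀ᵐ x ∂(volume.restrict K), (‖f x‖₊ : ENNReal) ≤ eLpNorm f ⊤ (volume.restrict K) := by
      rw [eLpNorm_exponent_top]
      exact ae_le_eLpNormEssSup
    have haeK : ∀ᵐ x ∂(volume.restrict K), ‖f x‖ ≤ C := by
      filter_upwards [hae0] with x hx
      calc ‖f x‖ = ((‖f x‖₊ : ENNReal)).toReal := by simp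
        _ ≤ C := ENNReal.toReal_mono hEtop hx
    have haeA : ∀ᵐ x ∂(volume.restrict (Ioc xs xt ∩ K)), ‖f x‖ ≤ C :=
      ae_mono (Measure.restrict_mono inter_subset_right le_rfl) haeK
    calc ‖∫ y in Ioc xs xt ∩ K, f y‖
        ≤ C * (volume (Ioc xs xt ∩ K)).toReal :=
          norm_setIntegral_le_of_norm_le_const_ae
            ((meas_ne_top hK _).lt_top) haeA
      _ = C * (t - s) := by rw [hIoc]
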